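/- Let A, B, C be complex d×d matrices with A and C symmetric, B invertible and Im C positive definite, and let Φ(x) = −½·Im⟨x,Ax⟩ + ½⟨Im(Bᵗx), (Im C)^{-1}·Im(Bᵗx)⟩ for x ∈ ℂ^d. Writing x = u + iv with u, v ∈ ℝ^d, the d×d matrix of mixed second derivatives with entries ¼(∂_{u_i}∂_{u_j} + ∂_{v_i}∂_{v_j})Φ is constant and equals ¼(Im B·(Im C)^{-1}·(Im B)ᵗ + Re B·(Im C)^{-1}·(Re B)ᵗ), and this matrix is positive definite; that is, Φ is uniformly strictly plurisubharmonic. -/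

import Mathlib

open Matrix

noncomputable section

/-- The weight `Φ(x) = -½ Im⟨x,Ax⟩ + ½⟨Im(Bᵀx), (Im C)⁻¹ Im(Bᵀx)⟩` on `ℂ^d`. -/
def Phi9 {d : ℕ} (A B C : Matrix (Fin d) (Fin d) ℂ) (x : Fin d → ℂ) : ℝ :=
  -(1 / 2) * (x ⬝ᵥ A *ᵥ x).im +
    (1 / 2) * ((fun j => ((Bᵀ *ᵥ x) j).im) ⬝ᵥ
      (C.map Complex.im)⁻¹ *ᵥ fun j => ((Bᵀ *ᵥ x) j).im)

/-- The matrix `¼ (Im B (Im C)⁻¹ (Im B)ᵀ + Re B (Im C)⁻¹ (Re B)ᵀ)`. -/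
def Levi9 {d : ℕ} (B C : Matrix (Fin d) (Fin d) ℂ) : Matrix (Fin d) (Fin d) ℝ :=
  (1 / 4 : ℝ) • (B.map Complex.im * (C.map Complex.im)⁻¹ * (B.map Complex.im)ᵀ +
    B.map Complex.re * (C.map Complex.im)⁻¹ * (B.map Complex.re)ᵀ)

namespace Statement9Aux

variable {d : ℕ}

/-- The real bilinear form whose diagonal is `Phi9`. -/
def bil (A B C : Matrix (Fin d) (Fin d) ℂ) (x y : Fin d → ℂ) : ℝ :=
  -(1 / 2) * (x ⬝ᵥ A *ᵥ y).im +
    (1 / 2) * ((fun j => ((Bᵀ *ᵥ x) j).im) ⬝ᵥ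
      (C.map Complex.im)⁻¹ *ᵥ fun j => ((Bᵀ *ᵥ y) j).im)

lemma Phi9_eq (A B C : Matrix (Fin d) (Fin d) ℂ) (x : Fin d → ℂ) :
    Phi9 A B C x = bil A B C x x := rfl

lemma im_mulVec_add (B : Matrix (Fin d) (Fin d) ℂ) (x y : Fin d → ℂ) :
    (fun j => ((Bᵀ *ᵥ (x + y)) j).im)
      = (fun j => ((Bᵀ *ᵥ x) j).im) + fun j => ((Bᵀ *ᵥ y) j).im := by
  funext j
  simp [Matrix.mulVec_add]

lemma im_mulVec_smul (B : Matrix (Fin d) (Fin d) ℂ) (s : ℝ) (x : Fin d → ℂ) :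
    (fun j => ((Bᵀ *ᵥ ((s : ℂ) • x)) j).im)
      = s • fun j => ((Bᵀ *ᵥ x) j).im := by
  funext j
  simp [Matrix.mulVec_smul, Complex.mul_im]

lemma bil_add_left (A B C : Matrix (Fin d) (Fin d) ℂ) (x y z : Fin d → ℂ) :
    bil A B C (x + y) z = bil A B C x z + bil A B C y z := by
  unfold bil
  rw [im_mulVec_add, add_dotProduct, add_dotProduct, Complex.add_im]
  ring

lemma bil_add_right (A B C : Matrix (Fin d) (Fin d) ℂ) (x y z : Fin d → ℂ) :
    bil A B C x (y + z) = bil A B C x y + bil A B C x z := by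
  unfold bil
  rw [Matrix.mulVec_add, dotProduct_add, Complex.add_im, im_mulVec_add,
    Matrix.mulVec_add, dotProduct_add]
  ring

lemma bil_smul_left (A B C : Matrix (Fin d) (Fin d) ℂ) (s : ℝ) (x z : Fin d → ℂ) :
    bil A B C ((s : ℂ) • x) z = s * bil A B C x z := by
  unfold bil
  rw [im_mulVec_smul, smul_dotProduct, smul_dotProduct, smul_eq_mul,
    smul_eq_mul, Complex.mul_im, Complex.ofReal_re, Complex.ofReal_im]
  ring

lemma bil_smul_right (A B C : Matrix (Fin d) (Fin d) ℂ) (s : ℝ) (x z : Fin d → ℂ) :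
    bil A B C x ((s : ℂ) • z) = s * bil A B C x z := by
  unfold bil
  rw [Matrix.mulVec_smul, dotProduct_smul, smul_eq_mul, Complex.mul_im,
    Complex.ofReal_re, Complex.ofReal_im, im_mulVec_smul, Matrix.mulVec_smul,
    dotProduct_smul, smul_eq_mul]
  ring

lemma Msymm {C : Matrix (Fin d) (Fin d) ℂ} (hCim : (C.map Complex.im).PosDef) :
    ((C.map Complex.im)⁻¹)ᵀ = (C.map Complex.im)⁻¹ := by
  have h := hCim.isHermitian
  rw [Matrix.IsHermitian, Matrix.conjTranspose_eq_transpose_of_trivial] at h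
  rw [Matrix.transpose_nonsing_inv, h]

lemma bil_symm {A C : Matrix (Fin d) (Fin d) ℂ} (B : Matrix (Fin d) (Fin d) ℂ)
    (hA : A.IsSymm) (hCim : (C.map Complex.im).PosDef) (x y : Fin d → ℂ) :
    bil A B C x y = bil A B C y x := by
  unfold bil
  have h1 : x ⬝ᵥ A *ᵥ y = y ⬝ᵥ A *ᵥ x := by
    rw [Matrix.dotProduct_mulVec, ← Matrix.mulVec_transpose, hA.eq, dotProduct_comm]
  have h2 : (fun j => ((Bᵀ *ᵥ x) j).im) ⬝ᵥ (C.map Complex.im)⁻¹ *ᵥ (fun j => ((Bᵀ *ᵥ y) j).im)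
      = (fun j => ((Bᵀ *ᵥ y) j).im) ⬝ᵥ (C.map Complex.im)⁻¹ *ᵥ (fun j => ((Bᵀ *ᵥ x) j).im) := by
    rw [Matrix.dotProduct_mulVec, ← Matrix.mulVec_transpose, Msymm hCim,
      dotProduct_comm]
  rw [h1, h2]

lemma key (A B C : Matrix (Fin d) (Fin d) ℂ) (x w u : Fin d → ℂ) (s t : ℝ) :
    Phi9 A B C (x + (s : ℂ) • w + (t : ℂ) • u)
      = (bil A B C x x + (bil A B C x w + bil A B C w x) * s
          + bil A B C w w * (s * s))
        + ((bil A B C x u + bil A B C u x) + (bil A B C w u + bil A B C u w) * s) * t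
        + bil A B C u u * (t * t) := by
  rw [Phi9_eq]
  simp only [bil_add_left, bil_add_right, bil_smul_left, bil_smul_right]
  ring

lemma deriv_quad (a b c : ℝ) : deriv (fun t : ℝ => a + b * t + c * (t * t)) 0 = b := by
  have h : HasDerivAt (fun t : ℝ => a + b * t + c * (t * t))
      (0 + b * 1 + c * (1 * 0 + 0 * 1)) 0 := by
    exact (((hasDerivAt_const (0 : ℝ) a).add ((hasDerivAt_id (0 : ℝ)).const_mul b)).add
      (((hasDerivAt_id (0 : ℝ)).mul (hasDerivAt_id (0 : ℝ))).const_mul c))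
  simpa using h.deriv

lemma deriv_affine (p q : ℝ) : deriv (fun s : ℝ => p + q * s) 0 = q := by
  have h : HasDerivAt (fun s : ℝ => p + q * s) (0 + q * 1) 0 :=
    (hasDerivAt_const (0 : ℝ) p).add ((hasDerivAt_id (0 : ℝ)).const_mul q)
  simpa using h.deriv

lemma mixed_deriv (A B C : Matrix (Fin d) (Fin d) ℂ) (x w u : Fin d → ℂ) :
    deriv (fun s : ℝ => deriv (fun t : ℝ =>
        Phi9 A B C (x + (s : ℂ) • w + (t : ℂ) • u)) 0) 0
      = bil A B C w u + bil A B C u w := by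
  have h1 : ∀ s : ℝ, deriv (fun t : ℝ => Phi9 A B C (x + (s : ℂ) • w + (t : ℂ) • u)) 0
      = (bil A B C x u + bil A B C u x) + (bil A B C w u + bil A B C u w) * s := by
    intro s
    have he : (fun t : ℝ => Phi9 A B C (x + (s : ℂ) • w + (t : ℂ) • u))
        = fun t : ℝ => (bil A B C x x + (bil A B C x w + bil A B C w x) * s
            + bil A B C w w * (s * s))
          + ((bil A B C x u + bil A B C u x) + (bil A B C w u + bil A B C u w) * s) * t
          + bil A B C u u * (t * t) := funext fun t => key A B C x w u s t
    rw [he, deriv_quad]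
  simp only [h1]
  exact deriv_affine _ _

lemma quad_entry (X N : Matrix (Fin d) (Fin d) ℝ) (j k : Fin d) :
    (fun i => X j i) ⬝ᵥ N *ᵥ (fun i => X k i) = (X * N * Xᵀ) j k := by
  simp only [Matrix.mul_apply, dotProduct, Matrix.mulVec, Matrix.transpose_apply,
    Finset.mul_sum, Finset.sum_mul]
  rw [Finset.sum_comm]
  apply Finset.sum_congr rfl
  intro i _
  apply Finset.sum_congr rfl
  intro l _
  ring

lemma bil_single_one (A B C : Matrix (Fin d) (Fin d) ℂ) (j k : Fin d) :
    bil A B C (Pi.single j (1 : ℂ)) (Pi.single k (1 : ℂ))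
      = -(1 / 2) * (A j k).im
        + (1 / 2) * ((B.map Complex.im * (C.map Complex.im)⁻¹ * (B.map Complex.im)ᵀ) j k) := by
  unfold bil
  have h1 : (Pi.single j (1 : ℂ)) ⬝ᵥ A *ᵥ Pi.single k (1 : ℂ) = A j k := by
    simp [single_dotProduct, Matrix.mulVec_single]
  have h2 : ∀ m : Fin d, (fun i => ((Bᵀ *ᵥ Pi.single m (1 : ℂ)) i).im)
      = fun i => (B.map Complex.im) m i := by
    intro m; funext i
    simp [Matrix.mulVec_single, Matrix.map_apply]
  rw [h1, h2 j, h2 k, quad_entry]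

lemma bil_single_I (A B C : Matrix (Fin d) (Fin d) ℂ) (j k : Fin d) :
    bil A B C (Pi.single j Complex.I) (Pi.single k Complex.I)
      = (1 / 2) * (A j k).im
        + (1 / 2) * ((B.map Complex.re * (C.map Complex.im)⁻¹ * (B.map Complex.re)ᵀ) j k) := by
  unfold bil
  have h1 : (Pi.single j Complex.I) ⬝ᵥ A *ᵥ Pi.single k Complex.I = -(A j k) := by
    simp only [single_dotProduct, Matrix.mulVec, dotProduct_single]
    have : Complex.I * (A j k * Complex.I) = A j k * (Complex.I * Complex.I) := by ring
    rw [this, Complex.I_mul_I]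
    ring
  have h2 : ∀ m : Fin d, (fun i => ((Bᵀ *ᵥ Pi.single m Complex.I) i).im)
      = fun i => (B.map Complex.re) m i := by
    intro m; funext i
    simp [Matrix.mulVec_single, Matrix.map_apply, Complex.mul_im]
  rw [h1, h2 j, h2 k, quad_entry, Complex.neg_im]
  ring

end Statement9Aux

open Statement9Aux in
/-- For `A`, `C` symmetric, `B` invertible and `Im C` positive definite,
writing `x = u + iv`, the matrix of mixed second derivatives
`¼(∂_{u_j}∂_{u_k} + ∂_{v_j}∂_{v_k})Φ` of the weight `Φ` is constant, equal to
`¼ (Im B (Im C)⁻¹ (Im B)ᵀ + Re B (Im C)⁻¹ (Re B)ᵀ)`, and positive definite; i.e. `Φ` is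
uniformly strictly plurisubharmonic. -/
theorem statement9 (d : ℕ)
    (A B C : Matrix (Fin d) (Fin d) ℂ)
    (hA : A.IsSymm) (hC : C.IsSymm)
    (hB : IsUnit B.det)
    (hCim : (C.map Complex.im).PosDef) :
    (∀ (x : Fin d → ℂ) (j k : Fin d),
      (1 / 4) *
        ((deriv (fun s : ℝ => deriv (fun t : ℝ =>
            Phi9 A B C (x + (s : ℂ) • (Pi.single j (1 : ℂ) : Fin d → ℂ) +
              (t : ℂ) • (Pi.single k (1 : ℂ) : Fin d → ℂ))) 0) 0) +
         (deriv (fun s : ℝ => deriv (fun t : ℝ =>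
            Phi9 A B C (x + (s : ℂ) • (Pi.single j Complex.I : Fin d → ℂ) +
              (t : ℂ) • (Pi.single k Complex.I : Fin d → ℂ))) 0) 0)) =
      Levi9 B C j k) ∧
    (Levi9 B C).PosDef := by
  constructor
  · intro x j k
    rw [mixed_deriv, mixed_deriv,
      bil_symm B hA hCim (Pi.single k (1 : ℂ)) (Pi.single j (1 : ℂ)),
      bil_symm B hA hCim (Pi.single k Complex.I) (Pi.single j Complex.I),
      bil_single_one, bil_single_I]
    simp only [Levi9, Matrix.smul_apply, Matrix.add_apply, smul_eq_mul]
    ring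
  · have hN : ((C.map Complex.im)⁻¹).PosDef := hCim.inv
    set N := (C.map Complex.im)⁻¹ with hNdef
    set X := B.map Complex.im with hX
    set Y := B.map Complex.re with hY
    refine Matrix.PosDef.of_dotProduct_mulVec_pos ?_ ?_
    · rw [Matrix.IsHermitian, Matrix.conjTranspose_eq_transpose_of_trivial]
      unfold Levi9
      rw [Matrix.transpose_smul, Matrix.transpose_add, Matrix.transpose_mul,
        Matrix.transpose_mul, Matrix.transpose_transpose, Matrix.transpose_mul,
        Matrix.transpose_mul, Matrix.transpose_transpose, Msymm hCim]
      rw [← hNdef, ← hX, ← hY, mul_assoc, mul_assoc]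
    · intro y hy
      have hsy : star y = y := by
        funext i; simp
      have hdot : ∀ Z : Matrix (Fin d) (Fin d) ℝ,
          y ⬝ᵥ (Z * N * Zᵀ) *ᵥ y = (Zᵀ *ᵥ y) ⬝ᵥ N *ᵥ (Zᵀ *ᵥ y) := by
        intro Z
        rw [← Matrix.mulVec_mulVec, ← Matrix.mulVec_mulVec, Matrix.dotProduct_mulVec,
          ← Matrix.mulVec_transpose]
      have hnonneg : ∀ z : Fin d → ℝ, 0 ≤ z ⬝ᵥ N *ᵥ z := by
        intro z
        have := hN.posSemidef.dotProduct_mulVec_nonneg z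
        simpa using this
      have hpos : ∀ z : Fin d → ℝ, z ≠ 0 → 0 < z ⬝ᵥ N *ᵥ z := by
        intro z hz
        have := hN.dotProduct_mulVec_pos hz
        simpa using this
      -- not both `Xᵀ *ᵥ y` and `Yᵀ *ᵥ y` are zero
      have hne : Xᵀ *ᵥ y ≠ 0 ∨ Yᵀ *ᵥ y ≠ 0 := by
        by_contra h
        push_neg at h
        obtain ⟨h1, h2⟩ := h
        have hBt : IsUnit Bᵀ.det := by rwa [Matrix.det_transpose]
        have : Invertible Bᵀ := Matrix.invertibleOfIsUnitDet Bᵀ hBt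
        have hinj := Matrix.mulVec_injective_of_invertible Bᵀ
        have hyc : Bᵀ *ᵥ (fun i => (y i : ℂ)) = 0 := by
          funext i
          have hre : (Yᵀ *ᵥ y) i = 0 := by rw [h2]; rfl
          have him : (Xᵀ *ᵥ y) i = 0 := by rw [h1]; rfl
          simp only [Matrix.mulVec, dotProduct, Matrix.transpose_apply, hX, hY,
            Matrix.map_apply] at hre him
          show (∑ l, Bᵀ i l * (y l : ℂ)) = 0
          apply Complex.ext
          · rw [Complex.zero_re, Complex.re_sum]
            rw [← hre]
            apply Finset.sum_congr rfl
            intro l _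
            simp [Matrix.transpose_apply, Complex.mul_re]
          · rw [Complex.zero_im, Complex.im_sum]
            rw [← him]
            apply Finset.sum_congr rfl
            intro l _
            simp [Matrix.transpose_apply, Complex.mul_im]
        have : (fun i => (y i : ℂ)) = 0 := by
          apply hinj
          rw [hyc, Matrix.mulVec_zero]
        exact hy (funext fun i => by
          have := congrFun this i
          simpa using congrArg Complex.re this)
      have hq1 : 0 ≤ (Xᵀ *ᵥ y) ⬝ᵥ N *ᵥ (Xᵀ *ᵥ y) := hnonneg _
      have hq2 : 0 ≤ (Yᵀ *ᵥ y) ⬝ᵥ N *ᵥ (Yᵀ *ᵥ y) := hnonneg _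
      have hsum : 0 < (Xᵀ *ᵥ y) ⬝ᵥ N *ᵥ (Xᵀ *ᵥ y) + (Yᵀ *ᵥ y) ⬝ᵥ N *ᵥ (Yᵀ *ᵥ y) := by
        rcases hne with h | h
        · have := hpos _ h
          linarith
        · have := hpos _ h
          linarith
      rw [hsy]
      unfold Levi9
      rw [← hNdef, ← hX, ← hY, Matrix.smul_mulVec, Matrix.add_mulVec,
        dotProduct_smul, dotProduct_add, hdot, hdot, smul_eq_mul]
      positivity
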